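/- Let (X, d) be an infinite compact metric space. Then I(X) with the weak* topology satisfies the disjoint approximation property in the following sense: for every ε > 0 there exist continuous maps g₁, g₂ : I(X) → I(X) such that g₁(I(X)) ∩ g₂(I(X)) = ∅ and d̃(g_i(μ), μ) < ε for all μ ∈ I(X) and i = 1, 2, where d̃ is the metric d̃(μ, ν) = Σ_{n=1}^∞ 2^{−n}·d̃_n(μ, ν) on I(X). -/

import Mathlib

/-- An idempotent (Maslov) probability measure on a topological space `X` is a functional
`μ : C(X, ℝ) → ℝ` that is normalized on constants, shifts under addition of constants, and
turns pointwise maxima into maxima. -/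
def IsIdemMeasure {X : Type*} [TopologicalSpace X] (μ : C(X, ℝ) → ℝ) : Prop :=
  (∀ c : ℝ, μ (ContinuousMap.const X c) = c) ∧
  (∀ (c : ℝ) (φ : C(X, ℝ)), μ (ContinuousMap.const X c + φ) = c + μ φ) ∧
  (∀ φ ψ : C(X, ℝ), μ (φ ⊔ ψ) = max (μ φ) (μ ψ))

/-- The space `I(X)` of idempotent probability measures on `X`; as a subtype of the product
`(C(X, ℝ) → ℝ)` it automatically carries the weak* (pointwise convergence) topology. -/
abbrev IdemMeasure (X : Type*) [TopologicalSpace X] :=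
  {μ : C(X, ℝ) → ℝ // IsIdemMeasure μ}

/-- `n-LIP(X, d)`: the continuous functions that are Lipschitz with constant `n`. -/
def nLip (X : Type*) [MetricSpace X] (n : ℕ) : Set C(X, ℝ) :=
  {φ | ∀ x y : X, |φ x - φ y| ≤ (n : ℝ) * dist x y}

/-- The pseudometric `d̂ₙ(μ, ν) = sup { |μ(φ) − ν(φ)| : φ ∈ n-LIP(X, d) }`. -/
noncomputable def dHat {X : Type*} [MetricSpace X] (n : ℕ) (μ ν : C(X, ℝ) → ℝ) : ℝ :=
  sSup {r : ℝ | ∃ φ ∈ nLip X n, r = |μ φ - ν φ|}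

/-- `d̃ₙ = (1/n)·d̂ₙ`. -/
noncomputable def dTilde {X : Type*} [MetricSpace X] (n : ℕ) (μ ν : C(X, ℝ) → ℝ) : ℝ :=
  (1 / (n : ℝ)) * dHat n μ ν

/-- `d̃(μ, ν) = Σ_{n=1}^∞ 2^{−n}·d̃ₙ(μ, ν)`. -/
noncomputable def dMet {X : Type*} [MetricSpace X] (μ ν : C(X, ℝ) → ℝ) : ℝ :=
  ∑' k : ℕ, (1 / 2 ^ (k + 1) : ℝ) * dTilde (k + 1) μ ν

/-! ### Auxiliary lemmas about idempotent measures -/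

section Aux

variable {X : Type*} [TopologicalSpace X]

lemma idem_mono {μ : C(X, ℝ) → ℝ} (hμ : IsIdemMeasure μ) {φ ψ : C(X, ℝ)}
    (h : ∀ x, φ x ≤ ψ x) : μ φ ≤ μ ψ := by
  have h3 := hμ.2.2 φ ψ
  have he : φ ⊔ ψ = ψ := by ext x; exact max_eq_right (h x)
  rw [he] at h3
  calc μ φ ≤ max (μ φ) (μ ψ) := le_max_left _ _
    _ = μ ψ := h3.symm

lemma idem_le_const {μ : C(X, ℝ) → ℝ} (hμ : IsIdemMeasure μ) {φ : C(X, ℝ)} {c : ℝ}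
    (h : ∀ x, φ x ≤ c) : μ φ ≤ c := by
  have := idem_mono hμ (ψ := ContinuousMap.const X c) (fun x => h x)
  rwa [hμ.1] at this

lemma idem_abs_sub {μ : C(X, ℝ) → ℝ} (hμ : IsIdemMeasure μ) {φ ψ : C(X, ℝ)} {c : ℝ}
    (h : ∀ x, |φ x - ψ x| ≤ c) : |μ φ - μ ψ| ≤ c := by
  have h1 : μ φ ≤ c + μ ψ := by
    have := idem_mono hμ (φ := φ) (ψ := ContinuousMap.const X c + ψ)
      (fun x => by have := (abs_sub_le_iff.mp (h x)).1; simp; linarith)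
    rwa [hμ.2.1] at this
  have h2 : μ ψ ≤ c + μ φ := by
    have := idem_mono hμ (φ := ψ) (ψ := ContinuousMap.const X c + φ)
      (fun x => by have := (abs_sub_le_iff.mp (h x)).2; simp; linarith)
    rwa [hμ.2.1] at this
  rw [abs_sub_le_iff]; constructor <;> linarith

/-- Joining with a weighted Dirac measure preserves idempotent measures. -/
lemma isIdem_max_eval {m : C(X, ℝ) → ℝ} (hm : IsIdemMeasure m) (x₀ : X) {a : ℝ}
    (ha : 0 ≤ a) : IsIdemMeasure (fun φ => max (m φ) (φ x₀ - a)) := by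
  refine ⟨fun c => ?_, fun c φ => ?_, fun φ ψ => ?_⟩
  · simp only [hm.1, ContinuousMap.const_apply]
    exact max_eq_left (by linarith)
  · simp only [hm.2.1, ContinuousMap.add_apply, ContinuousMap.const_apply]
    rw [add_sub_assoc, max_add_add_left]
  · simp only [hm.2.2, ContinuousMap.sup_apply]
    rw [show (max (φ x₀) (ψ x₀)) - a = max (φ x₀ - a) (ψ x₀ - a) from
      (max_sub_sub_right _ _ _).symm, max_max_max_comm]

end Aux

/-! ### Auxiliary lemmas about the metric -/

section MetAux

variable {X : Type*} [MetricSpace X] {μ ν : C(X, ℝ) → ℝ}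

lemma dHat_nonneg (n : ℕ) : 0 ≤ dHat n μ ν :=
  Real.sSup_nonneg (by rintro r ⟨φ, hφ, rfl⟩; exact abs_nonneg _)

lemma dHat_le {n : ℕ} {c : ℝ} (hc : 0 ≤ c) (h : ∀ φ ∈ nLip X n, |μ φ - ν φ| ≤ c) :
    dHat n μ ν ≤ c :=
  Real.sSup_le (by rintro r ⟨φ, hφ, rfl⟩; exact h φ hφ) hc

lemma dTilde_nonneg (n : ℕ) : 0 ≤ dTilde n μ ν :=
  mul_nonneg (by positivity) (dHat_nonneg n)

lemma dTilde_le {n : ℕ} {c : ℝ} (hc : 0 ≤ c) (h : dHat n μ ν ≤ (n : ℝ) * c) :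
    dTilde n μ ν ≤ c := by
  obtain rfl | hn := Nat.eq_zero_or_pos n
  · simpa [dTilde] using hc
  · have hn' : (0 : ℝ) < n := by exact_mod_cast hn
    rw [dTilde, one_div, inv_mul_le_iff₀ hn']
    exact h

lemma dMet_le_of (K : ℕ) (c₀ E : ℝ) (hc₀ : 0 ≤ c₀)
    (hall : ∀ n : ℕ, dTilde n μ ν ≤ c₀ + E)
    (hsmall : ∀ n : ℕ, n ≤ K → dTilde n μ ν ≤ c₀) :
    dMet μ ν ≤ c₀ + (1 / 2 : ℝ) ^ K * (c₀ + E) := by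
  have hpow : ∀ k : ℕ, (1 / 2 ^ (k + 1) : ℝ) = (1 / 2 : ℝ) ^ (k + 1) := by
    intro k; rw [div_pow, one_pow]
  set t : ℕ → ℝ := fun k => (1 / 2 ^ (k + 1) : ℝ) * dTilde (k + 1) μ ν with ht_def
  have htn : ∀ k, 0 ≤ t k := fun k => mul_nonneg (by positivity) (dTilde_nonneg _)
  have htle : ∀ k, t k ≤ (1 / 2 : ℝ) ^ (k + 1) * (c₀ + E) := by
    intro k
    rw [ht_def]; simp only []
    rw [hpow]
    exact mul_le_mul_of_nonneg_left (hall _) (by positivity)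
  have hgsum : Summable (fun k : ℕ => (1 / 2 : ℝ) ^ (k + 1) * (c₀ + E)) := by
    have h := (summable_geometric_of_lt_one (by norm_num : (0:ℝ) ≤ 1/2)
      (by norm_num : (1/2:ℝ) < 1)).mul_right (c₀ + E)
    exact (summable_nat_add_iff 1).mpr h
  have ht : Summable t := Summable.of_nonneg_of_le htn htle hgsum
  have htsum1 : ∑' k : ℕ, (1 / 2 : ℝ) ^ (k + 1) = 1 := by
    have h : (fun k : ℕ => (1 / 2 : ℝ) ^ (k + 1)) = fun k => (1 / 2 : ℝ) * (1 / 2 : ℝ) ^ k := by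
      funext k; rw [pow_succ]; ring
    rw [h, tsum_mul_left, tsum_geometric_two]; norm_num
  have hgeo : Summable (fun k : ℕ => (1 / 2 : ℝ) ^ (k + 1)) :=
    (summable_nat_add_iff 1).mpr (summable_geometric_of_lt_one (by norm_num) (by norm_num))
  have hsplit := ht.sum_add_tsum_nat_add K
  have hhead : ∑ i ∈ Finset.range K, t i ≤ c₀ := by
    calc ∑ i ∈ Finset.range K, t i ≤ ∑ i ∈ Finset.range K, (1 / 2 : ℝ) ^ (i + 1) * c₀ := by
          apply Finset.sum_le_sum
          intro i hi
          rw [ht_def]; simp only []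
          rw [hpow]
          exact mul_le_mul_of_nonneg_left
            (hsmall (i + 1) (Nat.succ_le_of_lt (Finset.mem_range.mp hi))) (by positivity)
      _ = (∑ i ∈ Finset.range K, (1 / 2 : ℝ) ^ (i + 1)) * c₀ := by
          rw [Finset.sum_mul]
      _ ≤ (∑' k : ℕ, (1 / 2 : ℝ) ^ (k + 1)) * c₀ :=
          mul_le_mul_of_nonneg_right (hgeo.sum_le_tsum _ (fun i _ => by positivity)) hc₀
      _ = c₀ := by rw [htsum1, one_mul]
  have htail : ∑' n : ℕ, t (n + K) ≤ (1 / 2 : ℝ) ^ K * (c₀ + E) := by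
    have hb : ∀ n : ℕ, t (n + K) ≤ (1 / 2 : ℝ) ^ K * ((1 / 2 : ℝ) ^ (n + 1) * (c₀ + E)) := by
      intro n
      calc t (n + K) ≤ (1 / 2 : ℝ) ^ (n + K + 1) * (c₀ + E) := htle _
        _ = (1 / 2 : ℝ) ^ K * ((1 / 2 : ℝ) ^ (n + 1) * (c₀ + E)) := by
            rw [← mul_assoc, ← pow_add]; ring_nf
    have hsr : Summable (fun n : ℕ => (1 / 2 : ℝ) ^ K * ((1 / 2 : ℝ) ^ (n + 1) * (c₀ + E))) :=
      (hgsum).mul_left _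
    calc ∑' n : ℕ, t (n + K) ≤ ∑' n : ℕ, (1 / 2 : ℝ) ^ K * ((1 / 2 : ℝ) ^ (n + 1) * (c₀ + E)) :=
          ((summable_nat_add_iff K).mpr ht).tsum_le_tsum hb hsr
      _ = (1 / 2 : ℝ) ^ K * ((∑' n : ℕ, (1 / 2 : ℝ) ^ (n + 1)) * (c₀ + E)) := by
          rw [tsum_mul_left, tsum_mul_right]
      _ = (1 / 2 : ℝ) ^ K * (c₀ + E) := by rw [htsum1, one_mul]
  have hfin : dMet μ ν = ∑ i ∈ Finset.range K, t i + ∑' n : ℕ, t (n + K) := by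
    rw [dMet, ← hsplit]
  rw [hfin]
  linarith

lemma aux_max (p q r : ℝ) : |max p q - r| ≤ max |p - r| (max (q - r) 0) := by
  rw [abs_sub_le_iff]
  constructor
  · rcases le_total p q with h | h
    · rw [max_eq_right h]
      exact le_trans (le_max_left (q - r) 0) (le_max_right _ _)
    · rw [max_eq_left h]
      exact le_trans (le_abs_self _) (le_max_left _ _)
  · have h1 : r - max p q ≤ r - p := sub_le_sub_left (le_max_left _ _) r
    have h2 : r - p ≤ |p - r| := by rw [abs_sub_comm]; exact le_abs_self _
    exact le_trans (le_trans h1 h2) (le_max_left _ _)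

end MetAux

/-! ### The lowering kernel -/

section T
variable {X : Type*} [MetricSpace X]

/-- trimming weight near `x₀` -/
noncomputable def betaF (x₀ : X) (b ρ : ℝ) : X → ℝ := fun x => b * max (1 - dist x x₀ / ρ) 0

/-- suppression weight for the auxiliary point -/
noncomputable def gamF (x₀ : X) (Kr ρ : ℝ) : X → ℝ := fun x => Kr * max (dist x x₀ - ρ) 0

lemma betaF_cont (x₀ : X) (b ρ : ℝ) : Continuous (betaF x₀ b ρ) := by
  unfold betaF; fun_prop

lemma gamF_cont (x₀ : X) (Kr ρ : ℝ) : Continuous (gamF x₀ Kr ρ) := by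
  unfold gamF; fun_prop

lemma betaF_nonneg (x₀ : X) {b : ℝ} (hb : 0 ≤ b) (ρ : ℝ) (x : X) : 0 ≤ betaF x₀ b ρ x :=
  mul_nonneg hb (le_max_right _ _)

lemma gamF_nonneg (x₀ : X) {Kr : ℝ} (hK : 0 ≤ Kr) (ρ : ℝ) (x : X) : 0 ≤ gamF x₀ Kr ρ x :=
  mul_nonneg hK (le_max_right _ _)

lemma betaF_eq_zero (x₀ : X) (b : ℝ) {ρ : ℝ} (hρ : 0 < ρ) {x : X}
    (h : ρ ≤ dist x x₀) : betaF x₀ b ρ x = 0 := by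
  unfold betaF
  rw [max_eq_right, mul_zero]
  have : 1 ≤ dist x x₀ / ρ := (one_le_div hρ).mpr h
  linarith

lemma gamF_eq_zero (x₀ : X) (Kr : ℝ) {ρ : ℝ} {x : X}
    (h : dist x x₀ ≤ ρ) : gamF x₀ Kr ρ x = 0 := by
  unfold gamF
  rw [max_eq_right, mul_zero]
  linarith

/-- The lowering kernel: it trims the mass of a measure near `x₀` by pushing it onto the
auxiliary point `y₀`. -/
noncomputable def Tmap (x₀ y₀ : X) (b ρ Kr : ℝ) (φ : C(X, ℝ)) : C(X, ℝ) :=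
  ⟨fun x => max (φ x - betaF x₀ b ρ x) (φ y₀ - gamF x₀ Kr ρ x),
    (φ.continuous.sub (betaF_cont x₀ b ρ)).max (continuous_const.sub (gamF_cont x₀ Kr ρ))⟩

lemma Tmap_apply (x₀ y₀ : X) (b ρ Kr : ℝ) (φ : C(X, ℝ)) (x : X) :
    Tmap x₀ y₀ b ρ Kr φ x = max (φ x - betaF x₀ b ρ x) (φ y₀ - gamF x₀ Kr ρ x) := rfl

lemma Tmap_const_add (x₀ y₀ : X) (b ρ Kr : ℝ) (c : ℝ) (φ : C(X, ℝ)) :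
    Tmap x₀ y₀ b ρ Kr (ContinuousMap.const X c + φ) =
      ContinuousMap.const X c + Tmap x₀ y₀ b ρ Kr φ := by
  ext x
  simp only [Tmap_apply, ContinuousMap.add_apply, ContinuousMap.const_apply]
  rw [add_sub_assoc, add_sub_assoc, max_add_add_left]

lemma Tmap_sup (x₀ y₀ : X) (b ρ Kr : ℝ) (φ ψ : C(X, ℝ)) :
    Tmap x₀ y₀ b ρ Kr (φ ⊔ ψ) = Tmap x₀ y₀ b ρ Kr φ ⊔ Tmap x₀ y₀ b ρ Kr ψ := by
  ext x
  simp only [Tmap_apply, ContinuousMap.sup_apply]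
  rw [← max_sub_sub_right (φ x) (ψ x), ← max_sub_sub_right (φ y₀) (ψ y₀), max_max_max_comm]

lemma Tmap_const (x₀ y₀ : X) {b ρ Kr : ℝ} (hb : 0 ≤ b) (hρ : 0 < ρ) (hK : 0 ≤ Kr) (c : ℝ) :
    Tmap x₀ y₀ b ρ Kr (ContinuousMap.const X c) = ContinuousMap.const X c := by
  ext x
  simp only [Tmap_apply, ContinuousMap.const_apply]
  rcases le_total ρ (dist x x₀) with h | h
  · rw [betaF_eq_zero x₀ b hρ h, sub_zero]
    exact max_eq_left (by have := gamF_nonneg x₀ hK ρ (x := x); linarith)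
  · rw [gamF_eq_zero x₀ Kr h, sub_zero]
    exact max_eq_right (by have := betaF_nonneg x₀ hb ρ (x := x); linarith)

/-- Composing with the lowering kernel preserves idempotent measures. -/
lemma isIdem_comp_Tmap {m : C(X, ℝ) → ℝ} (hm : IsIdemMeasure m) (x₀ y₀ : X)
    {b ρ Kr : ℝ} (hb : 0 ≤ b) (hρ : 0 < ρ) (hK : 0 ≤ Kr) :
    IsIdemMeasure (fun φ => m (Tmap x₀ y₀ b ρ Kr φ)) := by
  refine ⟨fun c => ?_, fun c φ => ?_, fun φ ψ => ?_⟩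
  · show m (Tmap x₀ y₀ b ρ Kr (ContinuousMap.const X c)) = c
    rw [Tmap_const x₀ y₀ hb hρ hK, hm.1]
  · show m (Tmap x₀ y₀ b ρ Kr (ContinuousMap.const X c + φ)) = c + m (Tmap x₀ y₀ b ρ Kr φ)
    rw [Tmap_const_add, hm.2.1]
  · show m (Tmap x₀ y₀ b ρ Kr (φ ⊔ ψ)) =
      max (m (Tmap x₀ y₀ b ρ Kr φ)) (m (Tmap x₀ y₀ b ρ Kr ψ))
    rw [Tmap_sup, hm.2.2]

/-- The key pointwise estimate: the lowering kernel hardly moves `n`-Lipschitz functions. -/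
lemma Tmap_close (x₀ y₀ : X) {b ρ : ℝ} (hρ : 0 < ρ) (hb : 0 ≤ b) (K : ℕ) {D : ℝ}
    (hdist : ∀ x y : X, dist x y ≤ D) (hδ : dist y₀ x₀ ≤ ρ)
    {n : ℕ} {φ : C(X, ℝ)} (hφ : φ ∈ nLip X n) (x : X) :
    |Tmap x₀ y₀ b ρ (2 * (K : ℝ)) φ x - φ x| ≤
      (n : ℝ) * (3 * ρ) + max 0 ((n : ℝ) - K) * D := by
  have hn0 : (0 : ℝ) ≤ n := Nat.cast_nonneg n
  have hK0 : (0 : ℝ) ≤ K := Nat.cast_nonneg K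
  have hD0 : (0 : ℝ) ≤ D := le_trans dist_nonneg (hdist x x)
  have ht0 : (0 : ℝ) ≤ dist x x₀ := dist_nonneg
  have htD : dist x x₀ ≤ D := hdist x x₀
  have hRHS : 0 ≤ (n : ℝ) * (3 * ρ) + max 0 ((n : ℝ) - K) * D := by
    have := le_max_left (0:ℝ) ((n : ℝ) - K)
    nlinarith
  have hdxy : dist x y₀ ≤ dist x x₀ + dist y₀ x₀ := by
    rw [dist_comm y₀ x₀]; exact dist_triangle x x₀ y₀
  have hφxy := hφ x y₀
  rw [abs_sub_le_iff]
  constructor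
  · rw [Tmap_apply, sub_le_iff_le_add]
    apply max_le
    · have := betaF_nonneg x₀ hb ρ (x := x); linarith
    · have h1 : φ y₀ - φ x ≤ (n : ℝ) * dist x y₀ := by
        have := (abs_sub_le_iff.mp hφxy).2; linarith
      have h2 : (n : ℝ) * dist x y₀ ≤ (n : ℝ) * (dist x x₀ + dist y₀ x₀) :=
        mul_le_mul_of_nonneg_left hdxy hn0
      rcases le_total (dist x x₀) (2 * ρ) with hc | hc
      · have hg := gamF_nonneg x₀ (by positivity : (0:ℝ) ≤ 2 * (K:ℝ)) ρ (x := x)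
        have := le_max_left (0:ℝ) ((n : ℝ) - K)
        nlinarith
      · have hgam : gamF x₀ (2 * (K : ℝ)) ρ x = 2 * (K : ℝ) * (dist x x₀ - ρ) := by
          unfold gamF
          rw [max_eq_left (by linarith)]
        rcases le_total ((K : ℝ)) ((n : ℝ)) with hkn | hkn
        · have hmax : max 0 ((n : ℝ) - K) = (n : ℝ) - K := max_eq_right (by linarith)
          rw [hgam, hmax] at *
          nlinarith
        · have hmax : max 0 ((n : ℝ) - K) = 0 := max_eq_left (by linarith)
          rw [hgam, hmax] at *
          nlinarith
  · rw [Tmap_apply, sub_le_iff_le_add]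
    rcases le_total ρ (dist x x₀) with h | h
    · have heq : φ x - betaF x₀ b ρ x = φ x := by rw [betaF_eq_zero x₀ b hρ h, sub_zero]
      calc φ x = φ x - betaF x₀ b ρ x := heq.symm
        _ ≤ max (φ x - betaF x₀ b ρ x) (φ y₀ - gamF x₀ (2 * (K:ℝ)) ρ x) := le_max_left _ _
        _ ≤ _ := by linarith [hRHS]
    · have hgam : gamF x₀ (2 * (K : ℝ)) ρ x = 0 := gamF_eq_zero x₀ _ h
      have h1 : φ x - φ y₀ ≤ (n : ℝ) * dist x y₀ := by
        have := (abs_sub_le_iff.mp hφxy).1; linarith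
      have h2 : (n : ℝ) * dist x y₀ ≤ (n : ℝ) * (dist x x₀ + dist y₀ x₀) :=
        mul_le_mul_of_nonneg_left hdxy hn0
      have hmd := le_max_left (0:ℝ) ((n : ℝ) - K)
      rw [hgam]
      have h4 : (n : ℝ) * (dist x x₀ + dist y₀ x₀) ≤ (n:ℝ) * (2*ρ) :=
        mul_le_mul_of_nonneg_left (by linarith) hn0
      nlinarith [mul_nonneg hmd hD0, le_max_right (φ x - betaF x₀ b ρ x) (φ y₀ - 0)]

/-- the witness function separating the two images -/
noncomputable def psiF (x₀ : X) (L : ℝ) : C(X, ℝ) :=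
  ⟨fun z => -(L * dist z x₀), by fun_prop⟩

lemma psiF_x₀ (x₀ : X) (L : ℝ) : psiF x₀ L x₀ = 0 := by
  simp [psiF]

/-- Exactness: the lowering kernel pushes the witness function uniformly below `-b`. -/
lemma Tmap_psiF_le (x₀ y₀ : X) {b ρ Kr : ℝ} (hρ : 0 < ρ) (hb : 0 < b) (hK : 0 ≤ Kr)
    (hδ0 : 0 < dist y₀ x₀) (x : X) :
    Tmap x₀ y₀ b ρ Kr (psiF x₀ (b / ρ + b / dist y₀ x₀)) x ≤ -b := by
  set δ := dist y₀ x₀ with hδ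
  set L := b / ρ + b / δ with hL
  have hL0 : 0 ≤ L := by positivity
  have ht0 : (0:ℝ) ≤ dist x x₀ := dist_nonneg
  apply max_le
  · show psiF x₀ L x - betaF x₀ b ρ x ≤ -b
    have hpx : psiF x₀ L x = -(L * dist x x₀) := rfl
    rcases le_total ρ (dist x x₀) with h | h
    · have hβ0 : 0 ≤ betaF x₀ b ρ x := mul_nonneg hb.le (le_max_right _ _)
      have hkey : b ≤ L * dist x x₀ := by
        have h1 : b ≤ L * ρ := by
          rw [hL]
          have he : (b / ρ + b / δ) * ρ = b + (b / δ) * ρ := by field_simp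
          rw [he]
          have : 0 ≤ (b / δ) * ρ := by positivity
          linarith
        calc b ≤ L * ρ := h1
          _ ≤ L * dist x x₀ := mul_le_mul_of_nonneg_left h hL0
      rw [hpx]; linarith
    · have hβ : betaF x₀ b ρ x = b * (1 - dist x x₀ / ρ) := by
        unfold betaF
        rw [max_eq_left]
        have : dist x x₀ / ρ ≤ 1 := (div_le_one hρ).mpr h
        linarith
      rw [hpx, hβ]
      have key : 0 ≤ (b / δ) * dist x x₀ := by positivity
      have expand : L * dist x x₀ = b * dist x x₀ / ρ + (b / δ) * dist x x₀ := by
        rw [hL]; field_simp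
      have hb' : b * (1 - dist x x₀ / ρ) = b - b * dist x x₀ / ρ := by ring
      rw [hb']
      linarith [expand ▸ (le_refl (L * dist x x₀))]
  · show psiF x₀ L y₀ - gamF x₀ Kr ρ x ≤ -b
    have hγ0 : 0 ≤ gamF x₀ Kr ρ x := mul_nonneg hK (le_max_right _ _)
    have hpy : psiF x₀ L y₀ = -(L * δ) := rfl
    have hkey : b ≤ L * δ := by
      rw [hL]
      have he : (b / ρ + b / δ) * δ = (b / ρ) * δ + b := by field_simp
      rw [he]
      have : 0 ≤ (b / ρ) * δ := by positivity
      linarith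
    rw [hpy]; linarith

end T

/-- For an infinite compact metric space `(X, d)`, the space `I(X)` with
the weak* topology satisfies the disjoint approximation property: for every `ε > 0` there are
continuous maps `g₁, g₂ : I(X) → I(X)` with disjoint images that move every point by
`d̃`-distance less than `ε`. -/
theorem statement11 {X : Type*} [MetricSpace X] [CompactSpace X] [Infinite X]
    (ε : ℝ) (hε : 0 < ε) :
    ∃ g₁ g₂ : IdemMeasure X → IdemMeasure X,
      Continuous g₁ ∧ Continuous g₂ ∧
      Set.range g₁ ∩ Set.range g₂ = ∅ ∧
      ∀ μ : IdemMeasure X, dMet (g₁ μ).val μ.val < ε ∧ dMet (g₂ μ).val μ.val < ε := by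
  classical
  -- the diameter
  set D := Metric.diam (Set.univ : Set X) with hD_def
  have hD0 : 0 ≤ D := Metric.diam_nonneg
  have hdist : ∀ x y : X, dist x y ≤ D := fun x y =>
    Metric.dist_le_diam_of_mem isCompact_univ.isBounded (Set.mem_univ x) (Set.mem_univ y)
  -- an accumulation point
  have hacc : ∃ x₀ : X, ∀ r : ℝ, 0 < r → ∃ y : X, y ≠ x₀ ∧ dist y x₀ < r := by
    by_contra hcon
    push_neg at hcon
    haveI hdisc : DiscreteTopology X := by
      rw [discreteTopology_iff_isOpen_singleton]
      intro c
      obtain ⟨r, hr, hy⟩ := hcon c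
      rw [Metric.isOpen_singleton_iff]
      refine ⟨r, hr, fun y hyr => ?_⟩
      by_contra hne
      exact absurd hyr (not_lt.mpr (hy y hne))
    haveI : Finite X := finite_of_compact_of_discrete
    exact not_finite X
  obtain ⟨x₀, hx₀⟩ := hacc
  -- choice of constants
  obtain ⟨K, hK⟩ : ∃ K : ℕ, (1/2 : ℝ)^K * (D + 1) < ε/2 := by
    obtain ⟨K, hK⟩ := exists_pow_lt_of_lt_one (x := ε/2/(D+1)) (by positivity)
      (by norm_num : (1/2 : ℝ) < 1)
    exact ⟨K, (lt_div_iff₀ (by positivity)).mp hK⟩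
  set ρ : ℝ := min (ε/8) (1/4) with hρ_def
  have hρ0 : 0 < ρ := lt_min (by positivity) (by norm_num)
  have hρε : ρ ≤ ε/8 := min_le_left _ _
  have hρ1 : ρ ≤ 1/4 := min_le_right _ _
  obtain ⟨y₀, hy₀ne, hy₀lt⟩ := hx₀ ρ hρ0
  have hδ0 : 0 < dist y₀ x₀ := dist_pos.mpr hy₀ne
  have hδρ : dist y₀ x₀ ≤ ρ := hy₀lt.le
  set a : ℝ := (K : ℝ) * D with ha_def
  have ha0 : 0 ≤ a := mul_nonneg (Nat.cast_nonneg K) hD0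
  set b : ℝ := a + 1 with hb_def
  have hb0 : 0 < b := by rw [hb_def]; linarith
  have hKr0 : (0:ℝ) ≤ 2 * (K : ℝ) := by positivity
  set L : ℝ := b / ρ + b / dist y₀ x₀ with hL_def
  -- key fact: an idempotent measure of an `n`-Lipschitz function is within `n·D` of its
  -- value at `x₀`
  have hkey : ∀ (m : C(X,ℝ) → ℝ), IsIdemMeasure m → ∀ (n : ℕ), ∀ φ ∈ nLip X n,
      |m φ - φ x₀| ≤ (n : ℝ) * D := by
    intro m hm n φ hφ
    have h := idem_abs_sub hm (ψ := ContinuousMap.const X (φ x₀)) (c := (n:ℝ) * D)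
      (fun x => by
        simp only [ContinuousMap.const_apply]
        exact le_trans (hφ x x₀) (mul_le_mul_of_nonneg_left (hdist x x₀) (Nat.cast_nonneg n)))
    rwa [hm.1] at h
  -- the two maps
  refine ⟨fun μ => ⟨fun φ => max (μ.1 φ) (φ x₀ - a), isIdem_max_eval μ.2 x₀ ha0⟩,
          fun μ => ⟨fun φ => max (μ.1 (Tmap x₀ y₀ b ρ (2 * (K:ℝ)) φ)) (φ x₀ - b),
            isIdem_max_eval (isIdem_comp_Tmap μ.2 x₀ y₀ hb0.le hρ0 hKr0) x₀ hb0.le⟩,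
          ?_, ?_, ?_, ?_⟩
  · exact Continuous.subtype_mk (continuous_pi fun φ =>
      ((continuous_apply φ).comp continuous_subtype_val).max continuous_const) _
  · exact Continuous.subtype_mk (continuous_pi fun φ =>
      ((continuous_apply (Tmap x₀ y₀ b ρ (2 * (K:ℝ)) φ)).comp continuous_subtype_val).max
        continuous_const) _
  · -- disjoint images
    rw [Set.eq_empty_iff_forall_notMem]
    rintro z ⟨⟨μ, hμ⟩, ⟨ν, hν⟩⟩
    have h1 : -a ≤ z.val (psiF x₀ L) := by
      rw [← hμ]
      calc -a = psiF x₀ L x₀ - a := by rw [psiF_x₀]; ring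
        _ ≤ max (μ.1 (psiF x₀ L)) (psiF x₀ L x₀ - a) := le_max_right _ _
    have h2 : z.val (psiF x₀ L) = -b := by
      rw [← hν]
      show max (ν.1 (Tmap x₀ y₀ b ρ (2 * (K:ℝ)) (psiF x₀ L))) (psiF x₀ L x₀ - b) = -b
      have hle : ν.1 (Tmap x₀ y₀ b ρ (2 * (K:ℝ)) (psiF x₀ L)) ≤ -b :=
        idem_le_const ν.2 (fun x => Tmap_psiF_le x₀ y₀ hρ0 hb0 hKr0 hδ0 x)
      rw [psiF_x₀, zero_sub]
      exact max_eq_right hle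
    rw [h2] at h1
    rw [hb_def] at h1
    linarith
  · -- the distance estimates
    intro μ
    have hpowpos : (0:ℝ) < (1/2 : ℝ)^K := by positivity
    constructor
    · -- g₁
      have hbound : dMet (fun φ => max (μ.1 φ) (φ x₀ - a)) μ.1 ≤ 0 + (1/2 : ℝ)^K * (0 + D) := by
        apply dMet_le_of K 0 D le_rfl
        · intro n
          apply dTilde_le (by linarith)
          apply dHat_le (by positivity)
          intro φ hφ
          have hkeyφ := hkey μ.1 μ.2 n φ hφ
          rcases le_total (φ x₀ - a) (μ.1 φ) with h | h
          · rw [max_eq_left h, sub_self, abs_zero]; positivity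
          · rw [max_eq_right h, abs_of_nonneg (by linarith)]
            have hub : φ x₀ - μ.1 φ ≤ (n:ℝ) * D := (abs_sub_le_iff.mp hkeyφ).2
            have : (n:ℝ) * (0 + D) = (n:ℝ) * D := by ring
            rw [this]
            linarith
        · intro n hn
          apply dTilde_le le_rfl
          rw [mul_zero]
          apply dHat_le le_rfl
          intro φ hφ
          have hkeyφ := hkey μ.1 μ.2 n φ hφ
          have hna : (n:ℝ) * D ≤ a := by
            rw [ha_def]
            exact mul_le_mul_of_nonneg_right (by exact_mod_cast hn) hD0
          have hub : φ x₀ - μ.1 φ ≤ (n:ℝ) * D := (abs_sub_le_iff.mp hkeyφ).2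
          rw [max_eq_left (by linarith), sub_self, abs_zero]
      have hfin : (1/2 : ℝ)^K * (0 + D) ≤ (1/2 : ℝ)^K * (D + 1) := by
        apply mul_le_mul_of_nonneg_left (by linarith) hpowpos.le
      calc dMet (fun φ => max (μ.1 φ) (φ x₀ - a)) μ.1 ≤ 0 + (1/2 : ℝ)^K * (0 + D) := hbound
        _ ≤ (1/2 : ℝ)^K * (D + 1) := by linarith
        _ < ε/2 := hK
        _ < ε := by linarith
    · -- g₂
      have hcore : ∀ (n : ℕ), ∀ φ ∈ nLip X n,
          |max (μ.1 (Tmap x₀ y₀ b ρ (2 * (K:ℝ)) φ)) (φ x₀ - b) - μ.1 φ| ≤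
            (n:ℝ) * (3 * ρ) + max 0 ((n:ℝ) - K) * D := by
        intro n φ hφ
        have hcB0 : 0 ≤ (n:ℝ) * (3 * ρ) + max 0 ((n:ℝ) - K) * D :=
          add_nonneg (by positivity) (mul_nonneg (le_max_left _ _) hD0)
        refine le_trans (aux_max _ _ _) (max_le ?_ (max_le ?_ hcB0))
        · exact idem_abs_sub μ.2 (fun x => Tmap_close x₀ y₀ hρ0 hb0.le K hdist hδρ hφ x)
        · have hkeyφ := hkey μ.1 μ.2 n φ hφ
          have h1 : φ x₀ - μ.1 φ ≤ (n:ℝ) * D := (abs_sub_le_iff.mp hkeyφ).2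
          have h2 : ((n:ℝ) - K) * D ≤ max 0 ((n:ℝ) - K) * D :=
            mul_le_mul_of_nonneg_right (le_max_right _ _) hD0
          have h3 : 0 ≤ (n:ℝ) * (3 * ρ) := by positivity
          have hexp : ((n:ℝ) - K) * D = (n:ℝ) * D - a := by rw [ha_def]; ring
          rw [hb_def]
          linarith
      have hbound : dMet (fun φ => max (μ.1 (Tmap x₀ y₀ b ρ (2 * (K:ℝ)) φ)) (φ x₀ - b)) μ.1
          ≤ 3 * ρ + (1/2 : ℝ)^K * (3 * ρ + D) := by
        apply dMet_le_of K (3 * ρ) D (by linarith)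
        · intro n
          apply dTilde_le (by linarith)
          apply dHat_le (by positivity)
          intro φ hφ
          refine le_trans (hcore n φ hφ) ?_
          have hm1 : max 0 ((n:ℝ) - K) ≤ (n:ℝ) :=
            max_le (Nat.cast_nonneg n) (by have : (0:ℝ) ≤ K := Nat.cast_nonneg K; linarith)
          have hm2 : max 0 ((n:ℝ) - K) * D ≤ (n:ℝ) * D :=
            mul_le_mul_of_nonneg_right hm1 hD0
          have : (n:ℝ) * (3 * ρ + D) = (n:ℝ) * (3 * ρ) + (n:ℝ) * D := by ring
          rw [this]
          linarith
        · intro n hn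
          apply dTilde_le (by linarith)
          apply dHat_le (by positivity)
          intro φ hφ
          refine le_trans (hcore n φ hφ) ?_
          have hmax : max 0 ((n:ℝ) - K) = 0 := by
            apply max_eq_left
            have : (n:ℝ) ≤ (K:ℝ) := by exact_mod_cast hn
            linarith
          rw [hmax, zero_mul, add_zero]
      have hfin : (1/2 : ℝ)^K * (3 * ρ + D) ≤ (1/2 : ℝ)^K * (D + 1) :=
        mul_le_mul_of_nonneg_left (by linarith) hpowpos.le
      calc dMet (fun φ => max (μ.1 (Tmap x₀ y₀ b ρ (2 * (K:ℝ)) φ)) (φ x₀ - b)) μ.1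
          ≤ 3 * ρ + (1/2 : ℝ)^K * (3 * ρ + D) := hbound
        _ ≤ 3 * (ε/8) + (1/2 : ℝ)^K * (D + 1) := by linarith
        _ < 3 * (ε/8) + ε/2 := by linarith
        _ < ε := by linarith
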